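/- Let q be a prime power and K a finite field containing F_q. Define φ(u) = (u − u^{q²})^{q+1} / (u − u^q)^{q²+1} for those u ∈ K with u^{q²} ≠ u. Then for every such u the number of u' ∈ K with u'^{q²} ≠ u' and φ(u') = φ(u) is exactly q³ − q; that is, φ is (q³ − q)-to-1 on {u ∈ K : u^{q²} ≠ u}. -/

import Mathlib

open Polynomial

private lemma quad_aux {K : Type} [Field K] (q : ℕ) (hq0 : q ≠ 0)
    (hF : ∀ x y : K, (x+y)^q = x^q + y^q)
    (u α β γ : K) (hα : α^q = α) (hβ : β^q = β) (hγ : γ^q = γ)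
    (hu : (u^q)^q ≠ u) (h : α*u^2 + β*u + γ = 0) : α = 0 ∧ β = 0 ∧ γ = 0 := by
  have hSub : ∀ x y : K, (x-y)^q = x^q - y^q := by
    intro x y
    have := hF (x-y) y
    rw [sub_add_cancel] at this
    exact eq_sub_of_add_eq this.symm
  have hinj : ∀ x y : K, x^q = y^q → x = y := by
    intro x y hxy
    have : (x - y)^q = 0 := by rw [hSub, hxy, sub_self]
    have := pow_eq_zero_iff hq0 |>.mp this
    exact sub_eq_zero.mp this
  have hsq : ∀ x : K, (x^2)^q = (x^q)^2 := fun x => by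
    rw [← pow_mul, ← pow_mul, mul_comm]
  have hne1 : u ≠ u^q := by
    intro h'
    exact hu (by rw [← h', ← h'])
  have hne2 : u^q ≠ (u^q)^q := by
    intro h'
    exact hne1 (hinj u (u^q) h')
  have h1 : α*(u^q)^2 + β*(u^q) + γ = 0 := by
    have h1 := congrArg (· ^ q) h
    simp only [hF, mul_pow, hα, hβ, hγ, hsq, zero_pow hq0] at h1
    exact h1
  have h2 : α*((u^q)^q)^2 + β*((u^q)^q) + γ = 0 := by
    have h2 := congrArg (· ^ q) h1
    simp only [hF, mul_pow, hα, hβ, hγ, hsq, zero_pow hq0] at h2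
    exact h2
  have d1 : α*(u + u^q) + β = 0 := by
    have hz : (u - u^q) * (α*(u + u^q) + β) = 0 := by linear_combination h - h1
    rcases mul_eq_zero.mp hz with h' | h'
    · exact absurd (sub_eq_zero.mp h') hne1
    · exact h'
  have d2 : α*(u^q + (u^q)^q) + β = 0 := by
    have hz : (u^q - (u^q)^q) * (α*(u^q + (u^q)^q) + β) = 0 := by linear_combination h1 - h2
    rcases mul_eq_zero.mp hz with h' | h'
    · exact absurd (sub_eq_zero.mp h') hne2
    · exact h'
  have hα0 : α = 0 := by
    have hz : (u - (u^q)^q) * α = 0 := by linear_combination d1 - d2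
    rcases mul_eq_zero.mp hz with h' | h'
    · exact absurd (sub_eq_zero.mp h').symm hu
    · exact h'
  have hβ0 : β = 0 := by linear_combination d1 - (u + u^q) * hα0
  refine ⟨hα0, hβ0, by linear_combination h - u^2 * hα0 - u * hβ0⟩

private lemma ratio_aux {K : Type} [Field K] (q : ℕ) (hq0 : q ≠ 0) (e W A B : K)
    (he : e ≠ 0) (hW : W ≠ 0) (hB : B ≠ 0) (hefix : e^q = e) :
    (e*A/(W*(W^q)^q))^(q+1) / (e*B/(W*W^q))^(q^2+1) = A^(q+1)/B^(q^2+1) := by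
  have hWq : W^q ≠ 0 := pow_ne_zero _ hW
  have hWqq : (W^q)^q ≠ 0 := pow_ne_zero _ hWq
  have he2 : e^(q^2+1) = e^(q+1) := by
    rw [show q^2+1 = q*q+1 from by rw [pow_two]]
    rw [pow_succ e (q*q), pow_mul, hefix, hefix, pow_succ, hefix]
  have hBq : B^(q^2+1) ≠ 0 := pow_ne_zero _ hB
  have heq : (e*B/(W*W^q))^(q^2+1) ≠ 0 := by
    apply pow_ne_zero
    exact div_ne_zero (mul_ne_zero he hB) (mul_ne_zero hW hWq)
  field_simp
  rw [div_pow, div_pow, mul_pow e B, he2]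
  field_simp
  ring

private lemma affine_aux {K : Type} [Field K] (q : ℕ) (hq0 : q ≠ 0)
    (hF : ∀ x y : K, (x+y)^q = x^q + y^q)
    (u a b : K) (ha : a^q = a) (hb : b^q = b) (ha0 : a ≠ 0) (hu : u^q^2 ≠ u) :
    (a*u+b)^q^2 ≠ a*u+b ∧
      ((a*u+b) - (a*u+b)^q^2)^(q+1) / ((a*u+b) - (a*u+b)^q)^(q^2+1)
        = (u - u^q^2)^(q+1)/(u - u^q)^(q^2+1) := by
  have hqq : ∀ x : K, x^q^2 = (x^q)^q := fun x => by rw [pow_two, pow_mul]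
  have hvq : (a*u+b)^q = a*u^q + b := by rw [hF, mul_pow, ha, hb]
  have hvq2 : (a*u+b)^q^2 = a*u^q^2 + b := by
    rw [hqq, hvq, hF, mul_pow, ha, hb, ← hqq]
  have hA : (a*u+b) - (a*u+b)^q^2 = a*(u - u^q^2) := by rw [hvq2]; ring
  have hB : (a*u+b) - (a*u+b)^q = a*(u - u^q) := by rw [hvq]; ring
  have hune : u - u^q^2 ≠ 0 := sub_ne_zero.mpr (fun h => hu h.symm)
  have hAne : (a*u+b) - (a*u+b)^q^2 ≠ 0 := by
    rw [hA]; exact mul_ne_zero ha0 hune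
  constructor
  · intro h; exact hAne (by rw [h, sub_self])
  · rw [hA, hB, mul_pow, mul_pow]
    have ha2 : a^(q^2+1) = a^(q+1) := by
      rw [show q^2+1 = q*q+1 from by rw [pow_two]]
      rw [pow_succ a (q*q), pow_mul, ha, ha, pow_succ, ha]
    rw [ha2]
    exact mul_div_mul_left _ _ (pow_ne_zero _ ha0)

private lemma mobius_aux {K : Type} [Field K] (q : ℕ) (hq0 : q ≠ 0)
    (hF : ∀ x y : K, (x+y)^q = x^q + y^q)
    (u a b d : K) (ha : a^q = a) (hb : b^q = b) (hd : d^q = d)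
    (hdet : b ≠ a*d) (hw : u + d ≠ 0) (hu : u^q^2 ≠ u) :
    ((a*u+b)/(u+d))^q^2 ≠ (a*u+b)/(u+d) ∧
      ((a*u+b)/(u+d) - ((a*u+b)/(u+d))^q^2)^(q+1)
          / ((a*u+b)/(u+d) - ((a*u+b)/(u+d))^q)^(q^2+1)
        = (u - u^q^2)^(q+1)/(u - u^q)^(q^2+1) := by
  have hSub : ∀ x y : K, (x-y)^q = x^q - y^q := by
    intro x y
    have := hF (x-y) y
    rw [sub_add_cancel] at this
    exact eq_sub_of_add_eq this.symm
  have hqq : ∀ x : K, x^q^2 = (x^q)^q := fun x => by rw [pow_two, pow_mul]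
  have hwq : (u+d)^q = u^q + d := by rw [hF, hd]
  have hwq2 : ((u+d)^q)^q = u^q^2 + d := by rw [hwq, hF, hd, ← hqq]
  have hw1 : u^q + d ≠ 0 := by rw [← hwq]; exact pow_ne_zero _ hw
  have hw2 : u^q^2 + d ≠ 0 := by rw [← hwq2]; exact pow_ne_zero _ (pow_ne_zero _ hw)
  have he : a*d - b ≠ 0 := sub_ne_zero.mpr (fun h => hdet h.symm)
  have hvq : ((a*u+b)/(u+d))^q = (a*u^q+b)/(u^q+d) := by
    rw [div_pow, hwq, hF, mul_pow, ha, hb]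
  have hvq2 : ((a*u+b)/(u+d))^q^2 = (a*u^q^2+b)/(u^q^2+d) := by
    rw [hqq, hvq, div_pow, hF, mul_pow, ha, hb, hF, hd, ← hqq]
  have hA : (a*u+b)/(u+d) - ((a*u+b)/(u+d))^q
      = (a*d-b)*(u - u^q)/((u+d)*(u^q+d)) := by
    rw [hvq]; field_simp; ring
  have hB : (a*u+b)/(u+d) - ((a*u+b)/(u+d))^q^2
      = (a*d-b)*(u - u^q^2)/((u+d)*(u^q^2+d)) := by
    rw [hvq2]; field_simp; ring
  have hune2 : u - u^q^2 ≠ 0 := sub_ne_zero.mpr (fun h => hu h.symm)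
  have hune1 : u - u^q ≠ 0 := by
    refine sub_ne_zero.mpr (fun h => hu ?_)
    rw [hqq, ← h, ← h]
  have hAne : (a*u+b)/(u+d) - ((a*u+b)/(u+d))^q^2 ≠ 0 := by
    rw [hB]; exact div_ne_zero (mul_ne_zero he hune2) (mul_ne_zero hw hw2)
  constructor
  · intro h; exact hAne (by rw [h, sub_self])
  · rw [hB, hA,
      show (u+d)*(u^q^2+d) = (u+d)*(((u+d)^q)^q) from by rw [hwq2],
      show (u+d)*(u^q+d) = (u+d)*((u+d)^q) from by rw [hwq]]
    exact ratio_aux q hq0 (a*d-b) (u+d) _ _ he hw hune1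
      (by rw [hSub, mul_pow, ha, hd, hb])

private lemma upper_aux {K : Type} [Field K] (q : ℕ) (hq2 : 2 ≤ q)
    (Fq : Subfield K) [Fintype Fq] (hmem : ∀ x : K, x ∈ Fq → x^q = x)
    (hFqcard : Fintype.card Fq = q)
    (u : K) (hu : u^q^2 ≠ u)
    (T : Finset K)
    (hT : ∀ x ∈ T, x^q^2 ≠ x ∧
      (x - x^q^2)^(q+1)/(x - x^q)^(q^2+1) = (u - u^q^2)^(q+1)/(u - u^q)^(q^2+1)) :
    T.card ≤ q^3 - q := by
  classical
  have hq0 : q ≠ 0 := by omega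
  have hqq : ∀ x : K, x^q^2 = (x^q)^q := fun x => by rw [pow_two, pow_mul]
  have hfix : ∀ x : K, x^q = x → x^q^2 = x := fun x h => by rw [hqq, h, h]
  set c : K := (u - u^q^2)^(q+1)/(u - u^q)^(q^2+1) with hc
  have huq : u^q ≠ u := fun h => hu (hfix u h)
  have hc0 : c ≠ 0 := by
    apply div_ne_zero <;> apply pow_ne_zero <;> rw [sub_ne_zero]
    · exact fun h => hu h.symm
    · exact fun h => huq h.symm
  set P : K[X] := (X^(q^2) - X)^(q+1) - C c * (X^q - X)^(q^2+1) with hP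
  have h1q2 : 1 < q^2 := by nlinarith
  -- degree facts
  have hmonicA : ((X:K[X])^(q^2) - X).Monic := by
    apply monic_X_pow_sub
    rw [degree_X]
    exact_mod_cast h1q2
  have hdegA : ((X:K[X])^(q^2) - X).natDegree = q^2 := by
    rw [natDegree_sub_eq_left_of_natDegree_lt, natDegree_X_pow]
    rw [natDegree_X, natDegree_X_pow]; exact h1q2
  have hdegApow : (((X:K[X])^(q^2) - X)^(q+1)).natDegree = (q+1)*q^2 := by
    rw [hmonicA.natDegree_pow, hdegA]
  have hdegB : (C c * ((X:K[X])^q - X)^(q^2+1)).natDegree ≤ (q^2+1)*q := by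
    refine (natDegree_C_mul_le _ _).trans ?_
    refine (natDegree_pow_le).trans ?_
    have : ((X:K[X])^q - X).natDegree ≤ q := by
      refine (natDegree_sub_le _ _).trans ?_
      simp [natDegree_X_pow, natDegree_X]
      omega
    exact Nat.mul_le_mul_left _ this
  have hlt : (C c * ((X:K[X])^q - X)^(q^2+1)).natDegree
      < (((X:K[X])^(q^2) - X)^(q+1)).natDegree := by
    rw [hdegApow]
    refine lt_of_le_of_lt hdegB ?_
    nlinarith
  have hPmonic : P.Monic := (hmonicA.pow _).sub_of_left (degree_lt_degree hlt)
  have hP0 : P ≠ 0 := hPmonic.ne_zero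
  have hPdeg : P.natDegree = (q+1)*q^2 := by
    rw [hP, natDegree_sub_eq_left_of_natDegree_lt hlt, hdegApow]
  -- sign lemma
  have hsign : ((-1:K))^(q+1) = (-1)^(q^2+1) := by
    rcases Nat.even_or_odd q with h | h
    · have h2 : Even (q^2) := by rw [pow_two]; exact h.mul_left q
      rw [Odd.neg_one_pow h.add_one, Odd.neg_one_pow h2.add_one]
    · rw [Even.neg_one_pow h.add_one, Even.neg_one_pow (h.pow).add_one]
  -- members of T are roots
  have key1 : ∀ x ∈ T, P.IsRoot x := by
    intro x hx
    obtain ⟨hx1, hx2⟩ := hT x hx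
    have hxq : x^q ≠ x := fun h => hx1 (hfix x h)
    have hd0 : (x - x^q)^(q^2+1) ≠ 0 :=
      pow_ne_zero _ (sub_ne_zero.mpr (fun h => hxq h.symm))
    have hcross : (x - x^q^2)^(q+1) = c * (x - x^q)^(q^2+1) :=
      (div_eq_iff hd0).mp hx2
    have e1 : (x^q^2 - x)^(q+1) = (-1:K)^(q+1) * (x - x^q^2)^(q+1) := by
      rw [← neg_sub, neg_pow]
    have e2 : (x^q - x)^(q^2+1) = (-1:K)^(q^2+1) * (x - x^q)^(q^2+1) := by
      rw [← neg_sub, neg_pow]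
    have : P.eval x = (x^q^2 - x)^(q+1) - c * (x^q - x)^(q^2+1) := by
      simp [hP]
    rw [IsRoot, this, e1, e2, hcross, hsign]
    ring
  -- elements of Fq are roots of multiplicity ≥ q+1
  have key2 : ∀ x : K, x ∈ Fq → (X - C x)^(q+1) ∣ P := by
    intro x hx
    have hxq : x^q = x := hmem x hx
    have h1 : (X - C x) ∣ ((X:K[X])^(q^2) - X) := by
      refine dvd_iff_isRoot.mpr ?_
      simp [IsRoot, hfix x hxq]
    have h2 : (X - C x) ∣ ((X:K[X])^q - X) := by
      refine dvd_iff_isRoot.mpr ?_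
      simp [IsRoot, hxq]
    refine dvd_sub (pow_dvd_pow_of_dvd h1 _) ?_
    refine dvd_mul_of_dvd_right ?_ _
    exact (pow_dvd_pow _ (by nlinarith)).trans (pow_dvd_pow_of_dvd h2 _)
  -- counting
  set SF : Finset K := (Finset.univ : Finset Fq).image (fun y : Fq => (y : K)) with hSF
  have hSFcard : SF.card = q := by
    rw [hSF, Finset.card_image_of_injective _ Subtype.coe_injective,
      Finset.card_univ, hFqcard]
  have hSFmem : ∀ x : K, x ∈ SF ↔ x ∈ Fq := by
    intro x
    simp only [hSF, Finset.mem_image, Finset.mem_univ, true_and]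
    constructor
    · rintro ⟨y, rfl⟩; exact y.2
    · intro h; exact ⟨⟨x, h⟩, rfl⟩
  have hdisj : ∀ x ∈ T, x ∉ SF := by
    intro x hx hxS
    exact (hT x hx).1 (hfix x (hmem x ((hSFmem x).mp hxS)))
  have hmle : T.val + (q+1) • SF.val ≤ P.roots := by
    rw [Multiset.le_iff_count]
    intro x
    rw [Multiset.count_add, Multiset.count_nsmul, count_roots]
    by_cases hxT : x ∈ T
    · have hxS : x ∉ SF := hdisj x hxT
      rw [Multiset.count_eq_one_of_mem T.nodup hxT,
        Multiset.count_eq_zero_of_notMem hxS, Nat.mul_zero, Nat.add_zero]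
      exact (rootMultiplicity_pos hP0).mpr (key1 x hxT)
    · rw [Multiset.count_eq_zero_of_notMem hxT, Nat.zero_add]
      by_cases hxS : x ∈ SF
      · rw [Multiset.count_eq_one_of_mem SF.nodup hxS, Nat.mul_one]
        exact (le_rootMultiplicity_iff hP0).mpr (key2 x ((hSFmem x).mp hxS))
      · rw [Multiset.count_eq_zero_of_notMem hxS, Nat.mul_zero]
        exact Nat.zero_le _
  have hcard : T.card + (q+1)*q ≤ (q+1)*q^2 := by
    have h := Multiset.card_le_card hmle
    rw [Multiset.card_add, Multiset.card_nsmul] at h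
    have hroots := P.card_roots'
    rw [hPdeg] at hroots
    have h3 : (Multiset.card T.val) = T.card := rfl
    have h4 : (Multiset.card SF.val) = SF.card := rfl
    rw [h3, h4, hSFcard] at h
    omega
  have e1 : (q+1)*q^2 = q^3 + q^2 := by ring
  have e2 : (q+1)*q = q^2 + q := by ring
  rw [e1, e2] at hcard
  set a := q^3; set b := q^2
  omega


/-- The map `u ↦ (u - u^{q²})^{q+1} / (u - u^q)^{q²+1}` is `(q³ - q)`-to-one on
`{u ∈ K : u^{q²} ≠ u}`, for a finite field `K` containing `F_q`. -/
theorem stmt_2 (q : ℕ) (hq : IsPrimePow q)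
    (K : Type) [Field K] [Fintype K]
    (Fq : Subfield K) (hFq : Nat.card Fq = q)
    (u : K) (hu : u ^ q ^ 2 ≠ u) :
    Nat.card {u' : K // u' ^ q ^ 2 ≠ u' ∧
        (u' - u' ^ q ^ 2) ^ (q + 1) / (u' - u' ^ q) ^ (q ^ 2 + 1)
          = (u - u ^ q ^ 2) ^ (q + 1) / (u - u ^ q) ^ (q ^ 2 + 1)}
      = q ^ 3 - q := by
  classical
  haveI : Fintype Fq := Fintype.ofFinite _
  have hcardFq : Fintype.card Fq = q := by rw [← Nat.card_eq_fintype_card]; exact hFq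
  obtain ⟨m, hrprime, hqrm⟩ := @FiniteField.card Fq _ _ (ringChar Fq) (ringChar.charP Fq)
  rw [hcardFq] at hqrm
  haveI : Fact (ringChar Fq).Prime := ⟨hrprime⟩
  haveI hKr : CharP K (ringChar Fq) := by
    haveI := ringChar.charP Fq; exact charP_of_injective_ringHom Fq.subtype.injective _
  have hq2 : 2 ≤ q := by
    rw [hqrm]
    calc 2 ≤ ringChar Fq := hrprime.two_le
    _ ≤ (ringChar Fq) ^ (m : ℕ) := Nat.le_self_pow m.2.ne' _
  have hq0 : q ≠ 0 := by omega
  have hF : ∀ x y : K, (x+y)^q = x^q + y^q := by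
    intro x y; rw [hqrm]; exact add_pow_char_pow x y _ _
  have hSub : ∀ x y : K, (x-y)^q = x^q - y^q := by
    intro x y
    have := hF (x-y) y
    rw [sub_add_cancel] at this
    exact eq_sub_of_add_eq this.symm
  have hmem : ∀ x : K, x ∈ Fq → x^q = x := by
    intro x hx
    have h := FiniteField.pow_card (⟨x, hx⟩ : Fq)
    rw [hcardFq] at h
    have := congrArg (fun y : Fq => (y : K)) h
    simpa using this
  have hqq : ∀ x : K, x^q^2 = (x^q)^q := fun x => by rw [pow_two, pow_mul]
  have hfix : ∀ x : K, x^q = x → x^q^2 = x := fun x h => by rw [hqq, h, h]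
  have huq : u^q ≠ u := fun h => hu (hfix u h)
  have haddne : ∀ d : Fq, u + (d : K) ≠ 0 := by
    intro d h
    apply huq
    have h2 : u = ((-d : Fq) : K) := by push_cast; linear_combination h
    rw [h2, hmem _ (-d).2]
  set Φ : K → Prop := fun u' => u' ^ q ^ 2 ≠ u' ∧
      (u' - u' ^ q ^ 2) ^ (q + 1) / (u' - u' ^ q) ^ (q ^ 2 + 1)
        = (u - u ^ q ^ 2) ^ (q + 1) / (u - u ^ q) ^ (q ^ 2 + 1) with hΦ
  have hcoe0 : ∀ a : {a : Fq // a ≠ 0}, ((a : Fq) : K) ≠ 0 := by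
    intro a h
    exact a.2 (by exact_mod_cast h)
  have f1mem : ∀ a : {a : Fq // a ≠ 0}, ∀ b : Fq, Φ (((a : Fq) : K) * u + (b : K)) := by
    intro a b
    simp only [hΦ]
    exact affine_aux q hq0 hF u _ _ (hmem _ (a : Fq).2) (hmem _ b.2) (hcoe0 a) hu
  have f2mem : ∀ t : {t : Fq × Fq × Fq // t.2.1 ≠ t.1 * t.2.2},
      Φ (((t.1.1 : K) * u + (t.1.2.1 : K)) / (u + (t.1.2.2 : K))) := by
    rintro ⟨⟨a, b, d⟩, hdet⟩
    simp only [hΦ]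
    refine mobius_aux q hq0 hF u _ _ _ (hmem _ a.2) (hmem _ b.2) (hmem _ d.2)
      ?_ (haddne d) hu
    intro h
    exact hdet (by exact_mod_cast h)
  set f : ({a : Fq // a ≠ 0} × Fq) ⊕ {t : Fq × Fq × Fq // t.2.1 ≠ t.1 * t.2.2} →
      {u' : K // Φ u'} := fun x =>
    match x with
    | Sum.inl (a, b) => ⟨((a : Fq) : K) * u + (b : K), f1mem a b⟩
    | Sum.inr t => ⟨((t.1.1 : K) * u + (t.1.2.1 : K)) / (u + (t.1.2.2 : K)), f2mem t⟩
    with hf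
  have huqq : (u^q)^q ≠ u := by rw [← hqq]; exact hu
  have hinj : Function.Injective f := by
    rintro (⟨a, b⟩ | ⟨⟨a, b, d⟩, hdet⟩) (⟨a', b'⟩ | ⟨⟨a', b', d'⟩, hdet'⟩) hxy <;>
      simp only [hf, Subtype.mk.injEq] at hxy
    · -- affine / affine
      have quad : (0:K)*u^2 + (((a:Fq) - (a':Fq) : Fq) : K)*u + ((b - b' : Fq) : K) = 0 := by
        push_cast
        linear_combination hxy
      obtain ⟨-, h2, h3⟩ := quad_aux q hq0 hF u _ _ _ (by rw [zero_pow hq0])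
        (hmem _ ((a:Fq) - (a':Fq)).2) (hmem _ (b - b').2) huqq quad
      have ha : (a : Fq) = (a' : Fq) :=
        sub_eq_zero.mp ((ZeroMemClass.coe_eq_zero).mp h2)
      have hb : b = b' := sub_eq_zero.mp ((ZeroMemClass.coe_eq_zero).mp h3)
      simp only [Sum.inl.injEq, Prod.mk.injEq]
      exact ⟨Subtype.ext ha, hb⟩
    · -- affine / moebius : contradiction
      exfalso
      have h' : (((a:Fq):K)*u + (b:K)) * (u + ((d':Fq):K)) = ((a':Fq):K)*u + ((b':Fq):K) :=
        (eq_div_iff (haddne d')).mp hxy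
      have quad : ((a : Fq) : K)*u^2 + ((((a:Fq)*d' + b - a' : Fq)) : K)*u
          + (((b*d' - b' : Fq)) : K) = 0 := by
        push_cast
        linear_combination h'
      obtain ⟨h1, -, -⟩ := quad_aux q hq0 hF u _ _ _ (hmem _ (a:Fq).2)
        (hmem _ ((a:Fq)*d' + b - a').2) (hmem _ (b*d' - b').2) huqq quad
      exact hcoe0 a h1
    · -- moebius / affine : contradiction
      exfalso
      have h' : (((a':Fq):K)*u + ((b':Fq):K)) * (u + ((d:Fq):K)) = ((a:Fq):K)*u + ((b:Fq):K) :=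
        (eq_div_iff (haddne d)).mp hxy.symm
      have quad : ((a' : Fq) : K)*u^2 + ((((a':Fq)*d + b' - a : Fq)) : K)*u
          + (((b'*d - b : Fq)) : K) = 0 := by
        push_cast
        linear_combination h'
      obtain ⟨h1, -, -⟩ := quad_aux q hq0 hF u _ _ _ (hmem _ (a':Fq).2)
        (hmem _ ((a':Fq)*d + b' - a).2) (hmem _ (b'*d - b).2) huqq quad
      exact hcoe0 a' h1
    · -- moebius / moebius
      have h' : ((a:K)*u + (b:K)) * (u + ((d':Fq):K)) = ((a':K)*u + ((b':Fq):K)) * (u + ((d:Fq):K)) :=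
        (div_eq_div_iff (haddne d) (haddne d')).mp hxy
      have quad : ((a - a' : Fq) : K)*u^2 + (((a*d' + b - a'*d - b' : Fq)) : K)*u
          + (((b*d' - b'*d : Fq)) : K) = 0 := by
        push_cast
        linear_combination h'
      obtain ⟨h1, h2, h3⟩ := quad_aux q hq0 hF u _ _ _ (hmem _ (a - a').2)
        (hmem _ (a*d' + b - a'*d - b').2) (hmem _ (b*d' - b'*d).2) huqq quad
      have ha : a = a' := sub_eq_zero.mp ((ZeroMemClass.coe_eq_zero).mp h1)
      have h2' : a*d' + b - a'*d - b' = 0 := (ZeroMemClass.coe_eq_zero).mp h2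
      have h3' : b*d' - b'*d = 0 := (ZeroMemClass.coe_eq_zero).mp h3
      have hdd : (b - a*d)*(d' - d) = 0 := by
        rw [← ha] at h2'
        linear_combination h3' - d * h2'
      have hd : d' = d := by
        rcases mul_eq_zero.mp hdd with h | h
        · exact absurd (sub_eq_zero.mp h) hdet
        · exact sub_eq_zero.mp h
      have hb : b = b' := by
        rw [← ha, hd] at h2'
        linear_combination h2'
      simp only [Sum.inr.injEq, Subtype.mk.injEq, Prod.mk.injEq]
      exact ⟨ha, hb, hd.symm⟩
  -- lower bound
  have hle2 : q^3 - q ≤ Nat.card {u' : K // Φ u'} := by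
    have hc0 := Nat.card_le_card_of_injective f hinj
    have hcsum : Nat.card (({a : Fq // a ≠ 0} × Fq) ⊕
        {t : Fq × Fq × Fq // t.2.1 ≠ t.1 * t.2.2}) = q^3 - q := by
      have hc1 : Nat.card {a : Fq // a ≠ 0} = q - 1 := by
        rw [← Nat.card_congr (unitsEquivNeZero (G₀ := Fq)), Nat.card_units, hFq]
      have e2 : {t : Fq × Fq × Fq // t.2.1 = t.1 * t.2.2} ≃ Fq × Fq :=
        { toFun := fun t => (t.1.1, t.1.2.2)
          invFun := fun p => ⟨(p.1, p.1 * p.2, p.2), rfl⟩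
          left_inv := by
            rintro ⟨⟨a, b, d⟩, h⟩
            simp only at h
            simp [h]
          right_inv := fun p => rfl }
      have hc2 : Nat.card {t : Fq × Fq × Fq // t.2.1 ≠ t.1 * t.2.2} = q^3 - q^2 := by
        have heq : Fintype.card {t : Fq × Fq × Fq // t.2.1 = t.1 * t.2.2} = q^2 := by
          rw [← Nat.card_eq_fintype_card, Nat.card_congr e2, Nat.card_prod, hFq]
          ring
        have htot : Fintype.card (Fq × Fq × Fq) = q^3 := by
          rw [Fintype.card_prod, Fintype.card_prod, hcardFq]
          ring
        have hcompl := Fintype.card_subtype_compl (fun t : Fq × Fq × Fq => t.2.1 = t.1 * t.2.2)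
        rw [heq, htot] at hcompl
        rw [Nat.card_eq_fintype_card]
        exact hcompl
      rw [Nat.card_sum, Nat.card_prod, hFq, hc1, hc2]
      have h1 : q ≤ q^3 := Nat.le_self_pow (by norm_num) q
      have h2 : q^2 ≤ q^3 := Nat.pow_le_pow_right (by omega) (by norm_num)
      have h3 : 1 ≤ q := by omega
      zify [h1, h2, h3]
      ring
    rw [hcsum] at hc0
    exact hc0
  -- upper bound
  have hle1 : Nat.card {u' : K // Φ u'} ≤ q^3 - q := by
    have hbridge : Nat.card {u' : K // Φ u'} = (Finset.univ.filter Φ).card := by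
      rw [Nat.card_eq_fintype_card]
      exact Fintype.card_subtype _
    rw [hbridge]
    refine upper_aux q hq2 Fq hmem hcardFq u hu _ ?_
    intro x hx
    have h := (Finset.mem_filter.mp hx).2
    rw [hΦ] at h
    exact h
  have hfinal : Nat.card {u' : K // Φ u'} = q^3 - q := le_antisymm hle1 hle2
  simpa only [hΦ] using hfinal
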